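/- Let φ : ℝᵈ → ℝ be twice continuously differentiable, σ a constant, ε > 0, W ∈ C¹, and define μ = -∇·(K ε σ ∇φ) + (K/ε) σ W'(φ) + Σᵢ ξᵢ'(φ)(Gᵢ(cᵢ) - Gᵢ'(cᵢ)cᵢ) for constants cᵢ and C¹ functions ξᵢ, Gᵢ. Then the identity μ ∇φ = ∇·( K σ ( ((ε/2)|∇φ|² + W(φ)/ε) I - ε ∇φ ⊗ ∇φ ) ) + Σᵢ ξᵢ'(φ)(Gᵢ(cᵢ) - Gᵢ'(cᵢ)cᵢ) ∇φ holds pointwise, where I is the identity matrix and ∇· of a matrix field is the row-wise divergence. -/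

import Mathlib

open Real

theorem capillary_stress_reformulation
    (d : ℕ) (σ ε K : ℝ) (hε : 0 < ε) (hK : 0 < K)
    (φ : (Fin d → ℝ) → ℝ) (hφ : ContDiff ℝ 2 φ)
    (W ξ₁ ξ₂ G₁ G₂ : ℝ → ℝ)
    (hW : ContDiff ℝ 1 W) (hξ₁ : ContDiff ℝ 1 ξ₁) (hξ₂ : ContDiff ℝ 1 ξ₂)
    (hG₁ : ContDiff ℝ 1 G₁) (hG₂ : ContDiff ℝ 1 G₂)
    (c₁ c₂ : ℝ)
    (pd : Fin d → ((Fin d → ℝ) → ℝ) → (Fin d → ℝ) → ℝ)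
    (hpd : pd = fun j f x => fderiv ℝ f x (Pi.single j 1))
    (δGL : (Fin d → ℝ) → ℝ)
    (hδGL : δGL = fun x => (ε/2) * (∑ j, (pd j φ x)^2) + W (φ x) / ε)
    (μ : (Fin d → ℝ) → ℝ)
    (hμ : μ = fun x =>
      -(∑ j, pd j (fun y => K * ε * σ * pd j φ y) x)
      + (K/ε) * σ * deriv W (φ x)
      + (deriv ξ₁ (φ x) * (G₁ c₁ - deriv G₁ c₁ * c₁)
         + deriv ξ₂ (φ x) * (G₂ c₂ - deriv G₂ c₂ * c₂)))
    (T : (Fin d → ℝ) → Fin d → Fin d → ℝ)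
    (hT : T = fun x i j =>
      K * σ * (δGL x * (if i = j then (1:ℝ) else 0) - ε * pd i φ x * pd j φ x)) :
    ∀ (x : Fin d → ℝ) (i : Fin d),
      μ x * pd i φ x =
        (∑ j, pd j (fun y => T y i j) x)
        + (deriv ξ₁ (φ x) * (G₁ c₁ - deriv G₁ c₁ * c₁)
           + deriv ξ₂ (φ x) * (G₂ c₂ - deriv G₂ c₂ * c₂)) * pd i φ x := by
  subst hδGL hμ hT hpd
  intro x i
  beta_reduce
  have hφ1 : Differentiable ℝ φ := hφ.differentiable (by norm_num)
  have hf'cd : ContDiff ℝ 1 (fderiv ℝ φ) := hφ.fderiv_right (by norm_num)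
  have hH : HasFDerivAt (fderiv ℝ φ) (fderiv ℝ (fderiv ℝ φ) x) x :=
    (hf'cd.differentiable one_ne_zero x).hasFDerivAt
  set H : (Fin d → ℝ) →L[ℝ] (Fin d → ℝ) →L[ℝ] ℝ := fderiv ℝ (fderiv ℝ φ) x with hHdef
  have hsymm : ∀ u v, H u v = H v u :=
    second_derivative_symmetric (fun y => (hφ1 y).hasFDerivAt) hH
  set Dφ : Fin d → ℝ := fun j => fderiv ℝ φ x (Pi.single j 1) with hDφ
  -- derivative of each partial derivative
  have hg : ∀ j : Fin d,
      HasFDerivAt (fun y => fderiv ℝ φ y (Pi.single j 1)) (H.flip (Pi.single j 1)) x := by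
    intro j
    have := hH.clm_apply (hasFDerivAt_const (Pi.single j 1 : Fin d → ℝ) x)
    simpa using this
  -- derivative of W ∘ φ
  have hWφ : HasFDerivAt (fun y => W (φ y)) (deriv W (φ x) • fderiv ℝ φ x) x := by
    have hWd : HasDerivAt W (deriv W (φ x)) (φ x) :=
      (hW.differentiable one_ne_zero (φ x)).hasDerivAt
    exact hWd.comp_hasFDerivAt x (hφ1 x).hasFDerivAt
  have hWφε : HasFDerivAt (fun y => W (φ y) / ε)
      (ε⁻¹ • (deriv W (φ x) • fderiv ℝ φ x)) x := by
    simpa [div_eq_mul_inv] using hWφ.mul_const ε⁻¹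
  -- derivative of δGL
  have hδ : HasFDerivAt
      (fun y => (ε/2) * (∑ k, (fderiv ℝ φ y (Pi.single k 1))^2) + W (φ y) / ε)
      ((ε/2) • (∑ k, (Dφ k • H.flip (Pi.single k 1) + Dφ k • H.flip (Pi.single k 1)))
        + ε⁻¹ • (deriv W (φ x) • fderiv ℝ φ x)) x := by
    apply HasFDerivAt.add _ hWφε
    have hs : HasFDerivAt (fun y => ∑ k, (fderiv ℝ φ y (Pi.single k 1))^2)
        (∑ k, (Dφ k • H.flip (Pi.single k 1) + Dφ k • H.flip (Pi.single k 1))) x := by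
      apply HasFDerivAt.fun_sum
      intro k _
      have := (hg k).fun_mul (hg k)
      simpa [sq] using this
    simpa using hs.const_mul (ε/2)
  -- value of the μ second-derivative term
  have hμterm : ∀ j : Fin d,
      fderiv ℝ (fun y => K * ε * σ * fderiv ℝ φ y (Pi.single j 1)) x (Pi.single j 1)
        = K * ε * σ * H (Pi.single j 1) (Pi.single j 1) := by
    intro j
    rw [((hg j).const_mul (K * ε * σ)).fderiv]
    simp [mul_comm]
  -- value of the divergence of T
  have hTterm : ∀ j : Fin d,
      fderiv ℝ (fun y =>
        K * σ * (((ε/2) * (∑ k, (fderiv ℝ φ y (Pi.single k 1))^2) + W (φ y) / ε)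
            * (if i = j then (1:ℝ) else 0)
          - ε * fderiv ℝ φ y (Pi.single i 1) * fderiv ℝ φ y (Pi.single j 1))) x (Pi.single j 1)
      = K * σ * ((((ε/2) * (2 * ∑ k, Dφ k * H (Pi.single j 1) (Pi.single k 1))
            + ε⁻¹ * (deriv W (φ x) * Dφ j))) * (if i = j then (1:ℝ) else 0)
          - ε * (Dφ i * H (Pi.single j 1) (Pi.single j 1)
                 + Dφ j * H (Pi.single j 1) (Pi.single i 1))) := by
    intro j
    have hgi2 : HasFDerivAt
        (fun y => ε * fderiv ℝ φ y (Pi.single i 1) * fderiv ℝ φ y (Pi.single j 1))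
        ((ε * Dφ i) • H.flip (Pi.single j 1) + Dφ j • (ε • H.flip (Pi.single i 1))) x := by
      have := (((hg i).const_mul ε).fun_mul (hg j))
      simpa [mul_smul] using this
    have hbig := ((hδ.mul_const (if i = j then (1:ℝ) else 0)).fun_sub hgi2).const_mul (K * σ)
    rw [hbig.fderiv]
    simp only [ContinuousLinearMap.smul_apply, ContinuousLinearMap.add_apply,
      ContinuousLinearMap.sub_apply, ContinuousLinearMap.coe_sum', Finset.sum_apply,
      ContinuousLinearMap.flip_apply, ContinuousLinearMap.coe_smul', Pi.smul_apply,
      smul_eq_mul]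
    have hDφ' : ∀ k : Fin d, (fderiv ℝ φ x) (Pi.single k 1) = Dφ k := fun k => rfl
    have hsum2 : (∑ k, (Dφ k * H (Pi.single j 1) (Pi.single k 1)
          + Dφ k * H (Pi.single j 1) (Pi.single k 1)))
        = 2 * ∑ k, Dφ k * H (Pi.single j 1) (Pi.single k 1) := by
      rw [Finset.sum_add_distrib]; ring
    rw [hsum2]
    simp only [hDφ']
    ring
  simp only [hμterm, hTterm]
  -- now pure algebra with sums
  have hsplit : (∑ j, K * σ * ((((ε/2) * (2 * ∑ k, Dφ k * H (Pi.single j 1) (Pi.single k 1))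
            + ε⁻¹ * (deriv W (φ x) * Dφ j))) * (if i = j then (1:ℝ) else 0)
          - ε * (Dφ i * H (Pi.single j 1) (Pi.single j 1)
                 + Dφ j * H (Pi.single j 1) (Pi.single i 1))))
      = K * σ * ((ε/2) * (2 * ∑ k, Dφ k * H (Pi.single i 1) (Pi.single k 1))
            + ε⁻¹ * (deriv W (φ x) * Dφ i))
        - K * σ * ε * Dφ i * (∑ j, H (Pi.single j 1) (Pi.single j 1))
        - K * σ * ε * (∑ j, Dφ j * H (Pi.single j 1) (Pi.single i 1)) := by
    have key : ∀ j : Fin d, K * σ * ((((ε/2) * (2 * ∑ k, Dφ k * H (Pi.single j 1) (Pi.single k 1))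
            + ε⁻¹ * (deriv W (φ x) * Dφ j))) * (if i = j then (1:ℝ) else 0)
          - ε * (Dφ i * H (Pi.single j 1) (Pi.single j 1)
                 + Dφ j * H (Pi.single j 1) (Pi.single i 1)))
        = (if i = j then K * σ * ((ε/2) * (2 * ∑ k, Dφ k * H (Pi.single j 1) (Pi.single k 1))
            + ε⁻¹ * (deriv W (φ x) * Dφ j)) else 0)
          - (K * σ * ε * Dφ i * H (Pi.single j 1) (Pi.single j 1)
             + K * σ * ε * (Dφ j * H (Pi.single j 1) (Pi.single i 1))) := by
      intro j
      by_cases h : i = j <;> simp [h] <;> ring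
    rw [Finset.sum_congr rfl (fun j _ => key j), Finset.sum_sub_distrib,
      Finset.sum_ite_eq, Finset.sum_add_distrib, ← Finset.mul_sum, ← Finset.mul_sum]
    simp only [Finset.mem_univ, if_true]
    ring
  rw [hsplit]
  have hflip : (∑ j, Dφ j * H (Pi.single j 1) (Pi.single i 1))
      = ∑ k, Dφ k * H (Pi.single i 1) (Pi.single k 1) := by
    apply Finset.sum_congr rfl
    intro k _
    rw [hsymm]
  rw [hflip, ← Finset.mul_sum]
  field_simp
  ring
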